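/- Let d ≥ 1 and 1 ≤ p < ∞. There exist constants c, C > 0, depending only on d and p, such that for every h ∈ (0,1/2): (i) c |log h| ≤ ∫_{ℝ^d} K_h(x) dx ≤ C |log h|; and (ii) setting K̃_h = K_h / ‖K_h‖_{L¹}, for every u ∈ L^p(ℝ^d): ‖ u − K̃_h ⋆ u ‖_{L^p(ℝ^d)}^p ≤ C |log h|^{−1} ∫∫_{ℝ^{2d}} K_h(x−y) |u(x) − u(y)|^p dx dy. -/

import Mathlib

open MeasureTheory Filter

open Set
open scoped ENNReal NNReal

/-- The kernel `K_h(x) = (|x|+h)^{-d}` for `|x| ≤ 1`, `0` otherwise. -/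
noncomputable def Kh (d : ℕ) (h : ℝ) (x : EuclideanSpace ℝ (Fin d)) : ℝ :=
  if ‖x‖ ≤ 1 then ((‖x‖ + h) ^ d)⁻¹ else 0

variable {d : ℕ} {h : ℝ}

noncomputable def Vb (d : ℕ) : ℝ :=
  (volume (Metric.ball (0 : EuclideanSpace ℝ (Fin d)) 1)).toReal

lemma Vb_pos (hd : 1 ≤ d) : 0 < Vb d :=
  ENNReal.toReal_pos (ne_of_gt (Metric.measure_ball_pos volume 0 one_pos))
    (ne_of_lt measure_ball_lt_top)


lemma Kh_nonneg (hh : 0 < h) (x : EuclideanSpace ℝ (Fin d)) : 0 ≤ Kh d h x := by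
  unfold Kh; split
  · positivity
  · exact le_refl 0

lemma Kh_measurable : Measurable (Kh d h) := by
  unfold Kh
  exact Measurable.ite (measurableSet_le (by fun_prop) measurable_const) (by fun_prop)
    measurable_const

lemma Kh_le_const (hh : 0 < h) (x : EuclideanSpace ℝ (Fin d)) : Kh d h x ≤ (h ^ d)⁻¹ := by
  unfold Kh; split
  · exact inv_anti₀ (pow_pos hh d) (pow_le_pow_left₀ hh.le (le_add_of_nonneg_left (norm_nonneg x)) d)
  · positivity

lemma Kh_eq_zero (x : EuclideanSpace ℝ (Fin d)) (hx : ¬ ‖x‖ ≤ 1) : Kh d h x = 0 := if_neg hx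

lemma Kh_integrable (hh : 0 < h) : Integrable (Kh d h) := by
  have hmeas : MeasurableSet (Metric.closedBall (0 : EuclideanSpace ℝ (Fin d)) 1) :=
    measurableSet_closedBall
  refine Integrable.mono' (g := (Metric.closedBall (0 : EuclideanSpace ℝ (Fin d)) 1).indicator
    (fun _ => (h ^ d)⁻¹)) ?_ Kh_measurable.aestronglyMeasurable (ae_of_all _ fun x => ?_)
  · exact (integrable_indicator_iff hmeas).2 <| (integrableOn_const (by
      exact measure_closedBall_lt_top.ne))
  · rw [Real.norm_of_nonneg (Kh_nonneg hh x)]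
    by_cases hx : ‖x‖ ≤ 1
    · rw [Set.indicator_of_mem (by simpa [Metric.mem_closedBall, dist_zero_right] using hx)]
      exact Kh_le_const hh x
    · rw [Kh_eq_zero x hx]
      exact Set.indicator_nonneg (fun _ _ => by positivity) _

lemma lintegral_Kh_rpow_lt_top (hh : 0 < h) {q : ℝ} (hq : 0 < q) :
    ∫⁻ z, ENNReal.ofReal (Kh d h z) ^ q < ⊤ := by
  have hb : ∀ z : EuclideanSpace ℝ (Fin d), ENNReal.ofReal (Kh d h z) ^ q ≤
      (Metric.closedBall (0 : EuclideanSpace ℝ (Fin d)) 1).indicator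
        (fun _ => ENNReal.ofReal ((h ^ d)⁻¹) ^ q) z := by
    intro z
    by_cases hz : ‖z‖ ≤ 1
    · rw [Set.indicator_of_mem (by simpa [Metric.mem_closedBall, dist_zero_right] using hz)]
      exact ENNReal.rpow_le_rpow (ENNReal.ofReal_le_ofReal (Kh_le_const hh z)) hq.le
    · rw [Kh_eq_zero z hz, ENNReal.ofReal_zero, ENNReal.zero_rpow_of_pos hq]
      exact zero_le
  calc ∫⁻ z, ENNReal.ofReal (Kh d h z) ^ q ≤
      ∫⁻ z, (Metric.closedBall (0 : EuclideanSpace ℝ (Fin d)) 1).indicator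
        (fun _ => ENNReal.ofReal ((h ^ d)⁻¹) ^ q) z := lintegral_mono hb
    _ = ENNReal.ofReal ((h ^ d)⁻¹) ^ q * volume (Metric.closedBall (0 : EuclideanSpace ℝ (Fin d)) 1) := by
        rw [lintegral_indicator measurableSet_closedBall, setLIntegral_const]
    _ < ⊤ := ENNReal.mul_lt_top
        (ENNReal.rpow_lt_top_of_nonneg hq.le ENNReal.ofReal_ne_top) measure_closedBall_lt_top

lemma jensen_weight {α : Type*} [MeasurableSpace α] {μ : Measure α} {p : ℝ} (hp : 1 ≤ p)
    (w g : α → ℝ≥0∞) (hw : AEMeasurable w μ) (hg : AEMeasurable g μ)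
    (hw1 : ∫⁻ a, w a ∂μ = 1) :
    (∫⁻ a, w a * g a ∂μ) ^ p ≤ ∫⁻ a, w a * g a ^ p ∂μ := by
  rcases eq_or_lt_of_le hp with hp1 | hp1
  · rw [← hp1]
    simp
  · have hpq := Real.HolderConjugate.conjExponent hp1
    set q := Real.conjExponent p with hqdef
    have hp0 : 0 < p := by linarith
    have hq0 : 0 < q := hpq.symm.pos
    have key := ENNReal.lintegral_mul_le_Lp_mul_Lq μ hpq
      (f := fun a => w a ^ (1/p) * g a) (g := fun a => w a ^ (1/q))
      ((hw.pow_const _).mul hg) (hw.pow_const _)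
    have lhs_eq : ∫⁻ a, ((fun a => w a ^ (1/p) * g a) * fun a => w a ^ (1/q)) a ∂μ
        = ∫⁻ a, w a * g a ∂μ := by
      apply lintegral_congr
      intro a
      simp only [Pi.mul_apply]
      rw [mul_right_comm, ← ENNReal.rpow_add_of_nonneg _ _ (by positivity) (by positivity)]
      rw [show 1/p + 1/q = 1 by simpa [one_div] using hpq.inv_add_inv_eq_one, ENNReal.rpow_one]
    have r1 : ∫⁻ a, (w a ^ (1/p) * g a) ^ p ∂μ = ∫⁻ a, w a * g a ^ p ∂μ := by
      apply lintegral_congr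
      intro a
      rw [ENNReal.mul_rpow_of_nonneg _ _ hp0.le, ← ENNReal.rpow_mul,
        one_div, inv_mul_cancel₀ hp0.ne', ENNReal.rpow_one]
    have r2 : ∫⁻ a, (w a ^ (1/q)) ^ q ∂μ = 1 := by
      rw [← hw1]
      apply lintegral_congr
      intro a
      rw [← ENNReal.rpow_mul, one_div, inv_mul_cancel₀ hq0.ne', ENNReal.rpow_one]
    rw [lhs_eq, r1, r2, ENNReal.one_rpow, mul_one] at key
    calc (∫⁻ a, w a * g a ∂μ) ^ p ≤ ((∫⁻ a, w a * g a ^ p ∂μ) ^ (1/p)) ^ p :=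
          ENNReal.rpow_le_rpow key hp0.le
      _ = ∫⁻ a, w a * g a ^ p ∂μ := by
          rw [← ENNReal.rpow_mul, one_div, inv_mul_cancel₀ hp0.ne', ENNReal.rpow_one]

lemma partII {p c : ℝ} (hd : 1 ≤ d) (hp : 1 ≤ p) (hh : 0 < h) (hh2 : h < 1/2) (hc : 0 < c)
    (hlow : ENNReal.ofReal (c * |Real.log h|) ≤ ∫⁻ x, ENNReal.ofReal (Kh d h x))
    (u : EuclideanSpace ℝ (Fin d) → ℝ) (hu : MemLp u (ENNReal.ofReal p) volume) :
    (eLpNorm (fun x => u x -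
        ∫ y, (Kh d h (x - y) / ∫ z, Kh d h z) * u y) (ENNReal.ofReal p) volume) ^ p
      ≤ ENNReal.ofReal c⁻¹ * (ENNReal.ofReal |Real.log h|)⁻¹ *
          ∫⁻ x, ∫⁻ y, ENNReal.ofReal (Kh d h (x - y)) * ENNReal.ofReal |u x - u y| ^ p := by
  have hp0 : (0:ℝ) < p := lt_of_lt_of_le one_pos hp
  set m := ∫ z, Kh d h z with hmdef
  have hKi := Kh_integrable (d := d) hh
  have hmM : ENNReal.ofReal m = ∫⁻ x, ENNReal.ofReal (Kh d h x) :=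
    ofReal_integral_eq_lintegral_ofReal hKi (ae_of_all _ (Kh_nonneg hh))
  have hlog : Real.log h < 0 := Real.log_neg hh (by linarith)
  have hL : 0 < |Real.log h| := abs_pos.mpr (ne_of_lt hlog)
  have hcL : 0 < c * |Real.log h| := mul_pos hc hL
  have hmpos : 0 < ENNReal.ofReal m := by
    rw [hmM]
    exact lt_of_lt_of_le (ENNReal.ofReal_pos.2 hcL) hlow
  have hm : 0 < m := ENNReal.ofReal_pos.1 hmpos
  have hmne : ENNReal.ofReal m ≠ 0 := hmpos.ne'
  have hW : Measurable fun z => ENNReal.ofReal (Kh d h z) :=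
    ENNReal.measurable_ofReal.comp Kh_measurable
  have hUmeas : AEMeasurable u volume := hu.aestronglyMeasurable.aemeasurable
  -- integrability of the convolution integrand, for every x
  have hKu : ∀ x, Integrable (fun y => Kh d h (x - y) * u y) := by
    intro x
    have hMP : MeasurePreserving (fun y : EuclideanSpace ℝ (Fin d) => x - y) volume volume :=
      Measure.measurePreserving_sub_left volume x
    constructor
    · exact ((Kh_measurable.comp (measurable_const.sub measurable_id)).aestronglyMeasurable).mul
        hu.aestronglyMeasurable
    · show ∫⁻ y, (‖Kh d h (x - y) * u y‖₊ : ℝ≥0∞) ∂volume < ⊤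
      have heq : ∀ y, ((‖Kh d h (x - y) * u y‖₊ : ℝ≥0∞)) =
          ENNReal.ofReal (Kh d h (x - y)) * (‖u y‖₊ : ℝ≥0∞) := by
        intro y
        rw [nnnorm_mul, ENNReal.coe_mul, ← enorm_eq_nnnorm, Real.enorm_eq_ofReal_abs,
          abs_of_nonneg (Kh_nonneg hh _)]
      simp_rw [heq]
      rcases eq_or_lt_of_le hp with hp1 | hp1
      · -- p = 1
        have hu1 : Integrable u := by
          rw [← memLp_one_iff_integrable]
          rwa [← hp1, ENNReal.ofReal_one] at hu
        calc ∫⁻ y, ENNReal.ofReal (Kh d h (x - y)) * (‖u y‖₊ : ℝ≥0∞)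
            ≤ ∫⁻ y, ENNReal.ofReal ((h^d)⁻¹) * (‖u y‖₊ : ℝ≥0∞) := by
              apply lintegral_mono
              intro y
              exact mul_le_mul' (ENNReal.ofReal_le_ofReal (Kh_le_const hh _)) le_rfl
          _ = ENNReal.ofReal ((h^d)⁻¹) * ∫⁻ y, (‖u y‖₊ : ℝ≥0∞) := lintegral_const_mul' _ _
              ENNReal.ofReal_ne_top
          _ < ⊤ := ENNReal.mul_lt_top ENNReal.ofReal_lt_top hu1.2
      · -- p > 1
        have hpq := Real.HolderConjugate.conjExponent hp1
        set q := Real.conjExponent p with hqdef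
        have hq0 : 0 < q := hpq.symm.pos
        have key := ENNReal.lintegral_mul_le_Lp_mul_Lq volume hpq.symm
          (f := fun y => ENNReal.ofReal (Kh d h (x - y))) (g := fun y => (‖u y‖₊ : ℝ≥0∞))
          (hW.comp (measurable_const.sub measurable_id)).aemeasurable hUmeas.enorm
        refine lt_of_le_of_lt key ?_
        apply ENNReal.mul_lt_top
        · apply ENNReal.rpow_lt_top_of_nonneg (by positivity)
          have : ∫⁻ y, ENNReal.ofReal (Kh d h (x - y)) ^ q = ∫⁻ z, ENNReal.ofReal (Kh d h z) ^ q :=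
            hMP.lintegral_comp (hW.pow_const q)
          rw [this]
          exact (lintegral_Kh_rpow_lt_top hh hq0).ne
        · apply ENNReal.rpow_lt_top_of_nonneg (by positivity)
          have h2 := hu.2
          rw [eLpNorm_eq_lintegral_rpow_enorm_toReal (by simp [ENNReal.ofReal_eq_zero]; linarith)
            ENNReal.ofReal_ne_top, ENNReal.toReal_ofReal hp0.le] at h2
          have := (ENNReal.rpow_lt_top_iff_of_pos (by positivity : (0:ℝ) < 1/p)).1 h2
          exact this.ne
  -- pointwise identity and bound
  have hmain : ∀ x, ((‖u x - ∫ y, (Kh d h (x - y) / m) * u y‖₊ : ℝ≥0∞)) ^ p ≤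
      (∫⁻ y, ENNReal.ofReal (Kh d h (x - y)) * ENNReal.ofReal |u x - u y| ^ p) *
        (ENNReal.ofReal m)⁻¹ := by
    intro x
    have hMP : MeasurePreserving (fun y : EuclideanSpace ℝ (Fin d) => x - y) volume volume :=
      Measure.measurePreserving_sub_left volume x
    have hKx : Integrable (fun y => Kh d h (x - y)) := hKi.comp_sub_left x
    have h1 : Integrable (fun y => Kh d h (x - y) / m * u x) := (hKx.div_const m).mul_const (u x)
    have h2 : Integrable (fun y => Kh d h (x - y) / m * u y) := by
      have := (hKu x).div_const m
      simpa [div_mul_eq_mul_div] using this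
    have h3 : ∫ y, Kh d h (x - y) / m = 1 := by
      rw [integral_div, integral_sub_left_eq_self (Kh d h) volume x, ← hmdef, div_self hm.ne']
    have hid : u x - ∫ y, (Kh d h (x - y) / m) * u y
        = ∫ y, Kh d h (x - y) / m * (u x - u y) := by
      have e : ∫ y, Kh d h (x - y) / m * (u x - u y)
          = (∫ y, Kh d h (x - y) / m * u x) - ∫ y, Kh d h (x - y) / m * u y := by
        rw [← integral_sub h1 h2]
        congr 1
        ext y
        ring
      rw [e, integral_mul_const, h3, one_mul]
    rw [hid]
    -- weight function
    set w : EuclideanSpace ℝ (Fin d) → ℝ≥0∞ := fun y => ENNReal.ofReal (Kh d h (x - y) / m)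
      with hwdef
    have hw_meas : Measurable w := ENNReal.measurable_ofReal.comp
      ((Kh_measurable.comp (measurable_const.sub measurable_id)).div_const m)
    have hw_eq : ∀ y, w y = ENNReal.ofReal (Kh d h (x - y)) * (ENNReal.ofReal m)⁻¹ := by
      intro y
      simp only [hwdef]
      rw [div_eq_mul_inv, ENNReal.ofReal_mul (Kh_nonneg hh _),
        ENNReal.ofReal_inv_of_pos hm]
    have hw1 : ∫⁻ y, w y = 1 := by
      simp_rw [hw_eq]
      rw [lintegral_mul_const' _ _ (by simp [hmne]),
        hMP.lintegral_comp hW, ← hmM, ENNReal.mul_inv_cancel hmne ENNReal.ofReal_ne_top]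
    set g : EuclideanSpace ℝ (Fin d) → ℝ≥0∞ := fun y => ENNReal.ofReal |u x - u y| with hgdef
    have hg_meas : AEMeasurable g volume := by
      apply ENNReal.measurable_ofReal.comp_aemeasurable
      exact continuous_abs.measurable.comp_aemeasurable (aemeasurable_const.sub hUmeas)
    have step1 : ((‖∫ y, Kh d h (x - y) / m * (u x - u y)‖₊ : ℝ≥0∞)) ≤ ∫⁻ y, w y * g y := by
      refine le_trans (enorm_integral_le_lintegral_enorm _) (le_of_eq ?_)
      apply lintegral_congr
      intro y
      rw [enorm_mul, Real.enorm_eq_ofReal_abs,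
        abs_of_nonneg (div_nonneg (Kh_nonneg hh _) hm.le), Real.enorm_eq_ofReal_abs]
    have step2 := jensen_weight hp w g hw_meas.aemeasurable hg_meas hw1
    have step3 : ∫⁻ y, w y * g y ^ p
        = (∫⁻ y, ENNReal.ofReal (Kh d h (x - y)) * g y ^ p) * (ENNReal.ofReal m)⁻¹ := by
      rw [← lintegral_mul_const' _ _ (show (ENNReal.ofReal m)⁻¹ ≠ ⊤ by simp [hmne])]
      apply lintegral_congr
      intro y
      rw [hw_eq y]
      ring
    calc ((‖∫ y, Kh d h (x - y) / m * (u x - u y)‖₊ : ℝ≥0∞)) ^ p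
        ≤ (∫⁻ y, w y * g y) ^ p := ENNReal.rpow_le_rpow step1 hp0.le
      _ ≤ ∫⁻ y, w y * g y ^ p := step2
      _ = (∫⁻ y, ENNReal.ofReal (Kh d h (x - y)) * g y ^ p) * (ENNReal.ofReal m)⁻¹ := step3
  -- assemble
  have hP0 : (ENNReal.ofReal p) ≠ 0 := ne_of_gt (ENNReal.ofReal_pos.2 hp0)
  rw [eLpNorm_eq_lintegral_rpow_enorm_toReal hP0 ENNReal.ofReal_ne_top,
    ENNReal.toReal_ofReal hp0.le, ← ENNReal.rpow_mul, one_div, inv_mul_cancel₀ hp0.ne',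
    ENNReal.rpow_one]
  have hconst : (ENNReal.ofReal m)⁻¹ ≤ ENNReal.ofReal c⁻¹ * (ENNReal.ofReal |Real.log h|)⁻¹ := by
    calc (ENNReal.ofReal m)⁻¹ ≤ (ENNReal.ofReal (c * |Real.log h|))⁻¹ :=
          ENNReal.inv_le_inv' (hmM ▸ hlow)
      _ = (ENNReal.ofReal c * ENNReal.ofReal |Real.log h|)⁻¹ := by
          rw [ENNReal.ofReal_mul hc.le]
      _ = (ENNReal.ofReal c)⁻¹ * (ENNReal.ofReal |Real.log h|)⁻¹ := by
          rw [ENNReal.mul_inv (Or.inl (ne_of_gt (ENNReal.ofReal_pos.2 hc))) (Or.inl ENNReal.ofReal_ne_top)]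
      _ = ENNReal.ofReal c⁻¹ * (ENNReal.ofReal |Real.log h|)⁻¹ := by
          rw [ENNReal.ofReal_inv_of_pos hc]
  calc ∫⁻ x, ((‖u x - ∫ y, (Kh d h (x - y) / m) * u y‖₊ : ℝ≥0∞)) ^ p
      ≤ ∫⁻ x, (∫⁻ y, ENNReal.ofReal (Kh d h (x - y)) * ENNReal.ofReal |u x - u y| ^ p) *
          (ENNReal.ofReal m)⁻¹ := lintegral_mono hmain
    _ = (∫⁻ x, ∫⁻ y, ENNReal.ofReal (Kh d h (x - y)) * ENNReal.ofReal |u x - u y| ^ p) *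
          (ENNReal.ofReal m)⁻¹ := lintegral_mul_const' _ _ (by simp [hmne])
    _ ≤ (∫⁻ x, ∫⁻ y, ENNReal.ofReal (Kh d h (x - y)) * ENNReal.ofReal |u x - u y| ^ p) *
          (ENNReal.ofReal c⁻¹ * (ENNReal.ofReal |Real.log h|)⁻¹) := mul_le_mul' le_rfl hconst
    _ = ENNReal.ofReal c⁻¹ * (ENNReal.ofReal |Real.log h|)⁻¹ *
          ∫⁻ x, ∫⁻ y, ENNReal.ofReal (Kh d h (x - y)) * ENNReal.ofReal |u x - u y| ^ p :=
        mul_comm _ _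


lemma oneD_eq (hd : 1 ≤ d) (hh : 0 < h) :
    ∫ r in Ioi (0:ℝ), r ^ (d - 1) • (if r ≤ 1 then ((r + h) ^ d)⁻¹ else 0)
      = ∫ r in Ioc (0:ℝ) 1, r ^ (d - 1) * ((r + h) ^ d)⁻¹ := by
  rw [setIntegral_congr_fun measurableSet_Ioi
    (g := fun r => (Iic (1:ℝ)).indicator (fun r => r ^ (d-1) * ((r + h) ^ d)⁻¹) r)
    (fun r hr => by by_cases h1 : r ≤ 1 <;> simp [indicator, h1, smul_eq_mul]),
    setIntegral_indicator measurableSet_Iic, Ioi_inter_Iic]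

lemma g0_integrableOn (hd : 1 ≤ d) (hh : 0 < h) {a b : ℝ} (ha : 0 ≤ a) :
    IntegrableOn (fun r : ℝ => r ^ (d - 1) * ((r + h) ^ d)⁻¹) (Ioc a b) := by
  refine (ContinuousOn.integrableOn_Icc ?_).mono_set Ioc_subset_Icc_self
  refine ((continuous_pow _).continuousOn).mul (ContinuousOn.inv₀ (by fun_prop) ?_)
  intro r hr
  exact ne_of_gt (pow_pos (by have := hr.1; linarith) d)

lemma inv_integrableOn {a b c : ℝ} (hc : 0 < c) (ha : 0 ≤ a) :
    IntegrableOn (fun r : ℝ => (r + c)⁻¹) (Ioc a b) := by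
  refine (ContinuousOn.integrableOn_Icc ?_).mono_set Ioc_subset_Icc_self
  refine ContinuousOn.inv₀ (by fun_prop) ?_
  intro r hr
  exact ne_of_gt (by have := hr.1; linarith)

lemma oneD_upper (hd : 1 ≤ d) (hh : 0 < h) (hh2 : h < 1/2) :
    ∫ r in Ioc (0:ℝ) 1, r ^ (d - 1) * ((r + h) ^ d)⁻¹ ≤ 2 * |Real.log h| := by
  have hlog : Real.log h < 0 := Real.log_neg hh (by linarith)
  have habs : |Real.log h| = -Real.log h := abs_of_neg hlog
  have hlog2 : Real.log 2 ≤ |Real.log h| := by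
    rw [habs]
    have : Real.log h ≤ Real.log (1/2) := Real.log_le_log hh (by linarith)
    rw [show (1/2 : ℝ) = 2⁻¹ by norm_num, Real.log_inv] at this
    linarith
  have step1 : ∫ r in Ioc (0:ℝ) 1, r ^ (d - 1) * ((r + h) ^ d)⁻¹
      ≤ ∫ r in Ioc (0:ℝ) 1, (r + h)⁻¹ := by
    refine setIntegral_mono_on (g0_integrableOn hd hh le_rfl) (inv_integrableOn hh le_rfl)
      measurableSet_Ioc ?_
    intro r hr
    have hr0 : 0 < r := hr.1
    have hpow : (r + h) ^ d = (r + h) ^ (d - 1) * (r + h) := by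
      rw [← pow_succ, Nat.sub_add_cancel hd]
    calc r ^ (d-1) * ((r + h) ^ d)⁻¹
        = (r ^ (d-1) / (r + h) ^ (d-1)) * (r + h)⁻¹ := by
          rw [hpow, mul_inv, div_eq_mul_inv]; ring
      _ ≤ 1 * (r + h)⁻¹ := by
          apply mul_le_mul_of_nonneg_right _ (by positivity)
          rw [div_le_one (by positivity)]
          exact pow_le_pow_left₀ hr0.le (by linarith) _
      _ = (r + h)⁻¹ := one_mul _
  have step2 : ∫ r in Ioc (0:ℝ) 1, (r + h)⁻¹ = Real.log (1 + h) - Real.log h := by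
    rw [← intervalIntegral.integral_of_le zero_le_one,
      intervalIntegral.integral_comp_add_right (fun x => x⁻¹) h,
      integral_inv_of_pos (by linarith) (by linarith)]
    rw [show (0:ℝ) + h = h by ring]
    rw [Real.log_div (by linarith) hh.ne']
  have step3 : Real.log (1 + h) ≤ Real.log 2 := Real.log_le_log (by linarith) (by linarith)
  calc ∫ r in Ioc (0:ℝ) 1, r ^ (d - 1) * ((r + h) ^ d)⁻¹ ≤ Real.log (1 + h) - Real.log h := by
        rw [← step2]; exact step1
    _ ≤ Real.log 2 + |Real.log h| := by rw [habs] at *; linarith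
    _ ≤ 2 * |Real.log h| := by linarith

lemma oneD_lower (hd : 1 ≤ d) (hh : 0 < h) (hh2 : h < 1/2) :
    ((2:ℝ) ^ d)⁻¹ * |Real.log h| ≤ ∫ r in Ioc (0:ℝ) 1, r ^ (d - 1) * ((r + h) ^ d)⁻¹ := by
  have hlog : Real.log h < 0 := Real.log_neg hh (by linarith)
  have habs : |Real.log h| = -Real.log h := abs_of_neg hlog
  have hinv_int : IntegrableOn (fun r : ℝ => ((2:ℝ) ^ d)⁻¹ * r⁻¹) (Ioc h 1) := by
    refine (ContinuousOn.integrableOn_Icc ?_).mono_set Ioc_subset_Icc_self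
    exact continuousOn_const.mul (ContinuousOn.inv₀ continuousOn_id
      (fun r hr => ne_of_gt (by have := hr.1; linarith)))
  have step1 : ∫ r in Ioc h 1, ((2:ℝ) ^ d)⁻¹ * r⁻¹
      ≤ ∫ r in Ioc h 1, r ^ (d - 1) * ((r + h) ^ d)⁻¹ := by
    refine setIntegral_mono_on hinv_int (g0_integrableOn hd hh hh.le) measurableSet_Ioc ?_
    intro r hr
    have hr0 : 0 < r := lt_trans hh hr.1
    have hrd : (r:ℝ) ^ d = r ^ (d - 1) * r := by rw [← pow_succ, Nat.sub_add_cancel hd]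
    calc ((2:ℝ) ^ d)⁻¹ * r⁻¹ = r ^ (d-1) * ((2 * r) ^ d)⁻¹ := by
          rw [mul_pow, hrd, mul_inv, mul_inv]
          field_simp
      _ ≤ r ^ (d-1) * ((r + h) ^ d)⁻¹ := by
          apply mul_le_mul_of_nonneg_left _ (by positivity)
          apply inv_anti₀ (by positivity)
          exact pow_le_pow_left₀ (by linarith) (by linarith [hr.1]) _
  have step2 : ∫ r in Ioc h 1, ((2:ℝ) ^ d)⁻¹ * r⁻¹ = ((2:ℝ) ^ d)⁻¹ * |Real.log h| := by
    rw [MeasureTheory.integral_const_mul, ← intervalIntegral.integral_of_le (by linarith : h ≤ 1),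
      integral_inv_of_pos hh one_pos, Real.log_div one_ne_zero hh.ne', Real.log_one, habs]
    ring
  have step3 : ∫ r in Ioc h 1, r ^ (d - 1) * ((r + h) ^ d)⁻¹
      ≤ ∫ r in Ioc (0:ℝ) 1, r ^ (d - 1) * ((r + h) ^ d)⁻¹ := by
    refine setIntegral_mono_set (g0_integrableOn hd hh le_rfl) ?_
      (HasSubset.Subset.eventuallyLE (Ioc_subset_Ioc_left hh.le))
    filter_upwards [ae_restrict_mem measurableSet_Ioc] with r hr
    have hr0 : 0 < r := hr.1
    have : 0 < r + h := by linarith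
    positivity
  linarith [step1, step2, step3]



lemma mass_eq (hd : 1 ≤ d) (hh : 0 < h) :
    ∫ x, Kh d h x = d * Vb d * ∫ r in Ioc (0:ℝ) 1, r ^ (d - 1) * ((r + h) ^ d)⁻¹ := by
  haveI : Nonempty (Fin d) := ⟨⟨0, hd⟩⟩
  haveI : Nontrivial (EuclideanSpace ℝ (Fin d)) := by infer_instance
  have hpolar := MeasureTheory.integral_fun_norm_addHaar
    (volume : Measure (EuclideanSpace ℝ (Fin d)))
    (fun r : ℝ => if r ≤ 1 then ((r + h) ^ d)⁻¹ else 0)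
  rw [show (Module.finrank ℝ (EuclideanSpace ℝ (Fin d))) = d from finrank_euclideanSpace_fin]
    at hpolar
  have hioc : ∫ r in Ioi (0:ℝ), r ^ (d - 1) • (if r ≤ 1 then ((r + h) ^ d)⁻¹ else 0)
      = ∫ r in Ioc (0:ℝ) 1, r ^ (d - 1) * ((r + h) ^ d)⁻¹ := by
    rw [setIntegral_congr_fun measurableSet_Ioi
      (g := fun r => (Iic (1:ℝ)).indicator (fun r => r ^ (d-1) * ((r + h) ^ d)⁻¹) r)
      (fun r hr => by by_cases h1 : r ≤ 1 <;> simp [indicator, h1, smul_eq_mul]),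
      setIntegral_indicator measurableSet_Iic, Ioi_inter_Iic]
  calc ∫ x, Kh d h x = ∫ x : EuclideanSpace ℝ (Fin d),
        (fun r : ℝ => if r ≤ 1 then ((r + h) ^ d)⁻¹ else 0) ‖x‖ := rfl
    _ = d • (Vb d) • ∫ r in Ioi (0:ℝ), r ^ (d - 1) • (if r ≤ 1 then ((r + h) ^ d)⁻¹ else 0) :=
        hpolar
    _ = d * Vb d * ∫ r in Ioc (0:ℝ) 1, r ^ (d - 1) * ((r + h) ^ d)⁻¹ := by
        rw [hioc]; simp [nsmul_eq_mul, smul_eq_mul]; ring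

lemma mass_bounds (hd : 1 ≤ d) (hh : 0 < h) (hh2 : h < 1/2) :
    ENNReal.ofReal ((↑d * Vb d * ((2:ℝ)^d)⁻¹) * |Real.log h|) ≤
        (∫⁻ x, ENNReal.ofReal (Kh d h x)) ∧
      (∫⁻ x, ENNReal.ofReal (Kh d h x)) ≤ ENNReal.ofReal ((↑d * Vb d * 2) * |Real.log h|) := by
  have hMe : (∫⁻ x, ENNReal.ofReal (Kh d h x)) = ENNReal.ofReal (∫ x, Kh d h x) :=
    (ofReal_integral_eq_lintegral_ofReal (Kh_integrable hh) (ae_of_all _ (Kh_nonneg hh))).symm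
  have hV : (0:ℝ) ≤ ↑d * Vb d := mul_nonneg (Nat.cast_nonneg d) ENNReal.toReal_nonneg
  have hJl := oneD_lower hd hh hh2
  have hJu := oneD_upper hd hh hh2
  constructor
  · rw [hMe]
    apply ENNReal.ofReal_le_ofReal
    rw [mass_eq hd hh]
    calc (↑d * Vb d * ((2:ℝ)^d)⁻¹) * |Real.log h|
        = (↑d * Vb d) * (((2:ℝ)^d)⁻¹ * |Real.log h|) := by ring
      _ ≤ (↑d * Vb d) * ∫ r in Ioc (0:ℝ) 1, r ^ (d - 1) * ((r + h) ^ d)⁻¹ :=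
          mul_le_mul_of_nonneg_left hJl hV
  · rw [hMe]
    apply ENNReal.ofReal_le_ofReal
    rw [mass_eq hd hh]
    calc ↑d * Vb d * ∫ r in Ioc (0:ℝ) 1, r ^ (d - 1) * ((r + h) ^ d)⁻¹
        ≤ ↑d * Vb d * (2 * |Real.log h|) := mul_le_mul_of_nonneg_left hJu hV
      _ = (↑d * Vb d * 2) * |Real.log h| := by ring

/-- (i) `∫ K_h ≍ |log h|`, and (ii) with `K̃_h = K_h / ‖K_h‖_{L¹}`, for every `u ∈ L^p`,
`‖u − K̃_h ⋆ u‖_{L^p}^p ≤ C |log h|⁻¹ ∫∫ K_h(x−y) |u(x) − u(y)|^p dx dy`. -/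
theorem kernel_mass_and_convolution_estimate (d : ℕ) (hd : 1 ≤ d) (p : ℝ) (hp : 1 ≤ p) :
    ∃ c C : ℝ, 0 < c ∧ 0 < C ∧
      ∀ h : ℝ, h ∈ Set.Ioo (0 : ℝ) (1/2) →
        (ENNReal.ofReal (c * |Real.log h|) ≤ (∫⁻ x, ENNReal.ofReal (Kh d h x)) ∧
         (∫⁻ x, ENNReal.ofReal (Kh d h x)) ≤ ENNReal.ofReal (C * |Real.log h|)) ∧
        ∀ u : EuclideanSpace ℝ (Fin d) → ℝ,
          MemLp u (ENNReal.ofReal p) volume →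
          (eLpNorm (fun x => u x -
              ∫ y, (Kh d h (x - y) / ∫ z, Kh d h z) * u y) (ENNReal.ofReal p) volume) ^ p
            ≤ ENNReal.ofReal C * (ENNReal.ofReal |Real.log h|)⁻¹ *
              ∫⁻ x, ∫⁻ y, ENNReal.ofReal (Kh d h (x - y)) *
                ENNReal.ofReal |u x - u y| ^ p := by
  set c : ℝ := ↑d * Vb d * ((2:ℝ)^d)⁻¹ with hcdef
  have hc : 0 < c := by
    have h1 := Vb_pos (d := d) hd
    have hd0 : (0:ℝ) < ↑d := by exact_mod_cast hd
    rw [hcdef]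
    positivity
  set C : ℝ := max (↑d * Vb d * 2) c⁻¹ with hCdef
  have hC : 0 < C := lt_of_lt_of_le (by positivity) (le_max_right _ _)
  refine ⟨c, C, hc, hC, ?_⟩
  intro h hmem
  obtain ⟨hh, hh2⟩ := hmem
  have hbounds := mass_bounds hd hh hh2
  have hLnn : (0:ℝ) ≤ |Real.log h| := abs_nonneg _
  constructor
  · refine ⟨hbounds.1, le_trans hbounds.2 (ENNReal.ofReal_le_ofReal ?_)⟩
    exact mul_le_mul_of_nonneg_right (le_max_left _ _) hLnn
  · intro u hu
    refine le_trans (partII hd hp hh hh2 hc hbounds.1 u hu) ?_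
    exact mul_le_mul' (mul_le_mul' (ENNReal.ofReal_le_ofReal (le_max_right _ _)) le_rfl) le_rfl
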